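/- The critical path length of the tiled BinaryTree algorithm (with TT kernels) satisfies CP_BT(p,q) = 6 q log₂ p + o(q log₂ p): for every sequence (p_n, q_n) of integer pairs with q_n ≤ p_n, q_n → ∞ and p_n → ∞, the ratio CP_BT(p_n, q_n) / (6 q_n log₂ p_n) tends to 1 as n → ∞. -/

import Mathlib

namespace TiledQR

/-- An elimination `elim(i, piv, k)`: tile `(i, k)` is zeroed out by an orthogonal
transformation combining row `i` with pivot row `piv`. -/
structure Elim where
  i : ℕ
  piv : ℕ
  k : ℕ
deriving DecidableEq

/-- `Before L e f` : the elimination `e` occurs strictly before `f` in the list `L`. -/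
def Before (L : List Elim) (e f : Elim) : Prop :=
  ∃ a b : Fin L.length, (a : ℕ) < b ∧ L.get a = e ∧ L.get b = f

/-- `L` is a valid elimination list for a `p × q` tiled matrix: it contains exactly one
elimination for every sub-diagonal tile `(i, k)` (`1 ≤ k ≤ min p q`, `k < i ≤ p`);
every elimination `elim(i, piv, k)` comes after all eliminations `elim(i, *, k')` and
`elim(piv, *, k')` with `k' < k`, and before the elimination `elim(piv, *, k)` of its
pivot row. -/
def ValidElimList (p q : ℕ) (L : List Elim) : Prop :=
  L.Nodup ∧
  (∀ e ∈ L, 1 ≤ e.k ∧ e.k ≤ min p q ∧ e.k < e.i ∧ e.i ≤ p ∧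
      1 ≤ e.piv ∧ e.piv ≤ p ∧ e.piv ≠ e.i) ∧
  (∀ i k, 1 ≤ k → k ≤ min p q → k < i → i ≤ p → ∃! piv, Elim.mk i piv k ∈ L) ∧
  (∀ a b : Fin L.length, (L.get b).k < (L.get a).k →
      ((L.get b).i = (L.get a).i ∨ (L.get b).i = (L.get a).piv) → (b : ℕ) < a) ∧
  (∀ a b : Fin L.length, (L.get b).k = (L.get a).k →
      (L.get b).i = (L.get a).piv → (a : ℕ) < b)

/-- The tasks of the tiled QR factorization with TT (triangle-on-top-of-triangle)
kernels. -/
inductive Task where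
  | GEQRT (r k : ℕ)
  | UNMQR (r k j : ℕ)
  | TTQRT (i piv k : ℕ)
  | TTMQR (i piv k j : ℕ)
deriving DecidableEq

/-- Weights of the TT kernels, the unit being `n_b ^ 3 / 3` flops. -/
def weight : Task → ℕ
  | .GEQRT _ _ => 4
  | .UNMQR _ _ _ => 6
  | .TTQRT _ _ _ => 2
  | .TTMQR _ _ _ _ => 6

/-- The tasks associated with a `p × q` tiled matrix and an elimination list `L`:
a factorization `GEQRT(r, k)` and updates `UNMQR(r, k, j)` (`k < j ≤ q`) for every tile
`(r, k)` with `k ≤ r ≤ p`, and, for every elimination `elim(i, piv, k)` of `L`, a task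
`TTQRT(i, piv, k)` and updates `TTMQR(i, piv, k, j)` for `k < j ≤ q`. -/
def InTasks (p q : ℕ) (L : List Elim) : Task → Prop
  | .GEQRT r k => 1 ≤ k ∧ k ≤ min p q ∧ k ≤ r ∧ r ≤ p
  | .UNMQR r k j => 1 ≤ k ∧ k ≤ min p q ∧ k ≤ r ∧ r ≤ p ∧ k < j ∧ j ≤ q
  | .TTQRT i piv k => Elim.mk i piv k ∈ L
  | .TTMQR i piv k j => Elim.mk i piv k ∈ L ∧ k < j ∧ j ≤ q

/-- The precedence (dependence) relation between the TT tasks.  Besides the flow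
dependencies of the kernels, two tasks reading and writing a common tile
(a pivot tile reused by several eliminations of a column, or a pivot tile that is
subsequently zeroed out) are serialized in the order of the elimination list. -/
inductive Prec (L : List Elim) : Task → Task → Prop
  | geqrt_unmqr (r k j : ℕ) :
      Prec L (.GEQRT r k) (.UNMQR r k j)
  | geqrt_ttqrt_row (i piv k : ℕ) :
      Prec L (.GEQRT i k) (.TTQRT i piv k)
  | geqrt_ttqrt_piv (i piv k : ℕ) :
      Prec L (.GEQRT piv k) (.TTQRT i piv k)
  | ttqrt_ttmqr (i piv k j : ℕ) :
      Prec L (.TTQRT i piv k) (.TTMQR i piv k j)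
  | unmqr_ttmqr_row (i piv k j : ℕ) :
      Prec L (.UNMQR i k j) (.TTMQR i piv k j)
  | unmqr_ttmqr_piv (i piv k j : ℕ) :
      Prec L (.UNMQR piv k j) (.TTMQR i piv k j)
  | ttmqr_geqrt (a b i k : ℕ) : 2 ≤ k → (a = i ∨ b = i) →
      Prec L (.TTMQR a b (k - 1) k) (.GEQRT i k)
  | ttqrt_serial (i i' piv k : ℕ) :
      Before L (Elim.mk i piv k) (Elim.mk i' piv k) →
      Prec L (.TTQRT i piv k) (.TTQRT i' piv k)
  | ttmqr_serial (i i' piv k j : ℕ) :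
      Before L (Elim.mk i piv k) (Elim.mk i' piv k) →
      Prec L (.TTMQR i piv k j) (.TTMQR i' piv k j)
  | ttqrt_pivot_use (a i piv k : ℕ) :
      Prec L (.TTQRT a i k) (.TTQRT i piv k)
  | ttmqr_pivot_use (a i piv k j : ℕ) :
      Prec L (.TTMQR a i k j) (.TTMQR i piv k j)

/-- A path in the weighted task DAG. -/
def IsPath (p q : ℕ) (L : List Elim) (path : List Task) : Prop :=
  (∀ t ∈ path, InTasks p q L t) ∧ path.Chain' (Prec L)

/-- The critical path length of the tiled algorithm given by the elimination list `L`: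
the maximum total weight of a path in the weighted task DAG (equivalently, the makespan
of the earliest-start schedule with unboundedly many processors). -/
noncomputable def cpLength (p q : ℕ) (L : List Elim) : ℕ :=
  sSup { w : ℕ | ∃ path : List Task, IsPath p q L path ∧ w = (path.map weight).sum }
/-- The elimination list of the tiled BinaryTree algorithm: in each column `k`, at
stage `s = 1, 2, …`, every row `i` such that `i - k` is an odd multiple of `2 ^ (s - 1)`
is zeroed out using pivot row `i - 2 ^ (s - 1)`; eliminations are listed column by
column and, within a column, by increasing stage. -/
def btList (p q : ℕ) : List Elim :=
  (List.range' 1 (min p q)).flatMap fun k =>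
    (List.range' 1 p).flatMap fun s =>
      (List.range' (k + 1) (p - k)).filterMap fun i =>
        if (i - k) % 2 ^ s = 2 ^ (s - 1) then some (Elim.mk i (i - 2 ^ (s - 1)) k)
        else none
def stageBlock (p k s : ℕ) : List Elim :=
  (List.range' (k + 1) (p - k)).filterMap fun i =>
    if (i - k) % 2 ^ s = 2 ^ (s - 1) then some (Elim.mk i (i - 2 ^ (s - 1)) k) else none

def colBlock (p k : ℕ) : List Elim := (List.range' 1 p).flatMap (stageBlock p k)

lemma btList_eq (p q : ℕ) : btList p q = (List.range' 1 (min p q)).flatMap (colBlock p) := rfl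

/-- the stage of an elimination -/
def stg (e : Elim) : ℕ := padicValNat 2 (e.i - e.k) + 1

lemma padic_of_mod {s x : ℕ} (hs : 1 ≤ s) (h : x % 2 ^ s = 2 ^ (s - 1)) :
    padicValNat 2 x = s - 1 ∧ 2 ^ (s - 1) ≤ x := by
  have h2 : 2 ^ s = 2 ^ (s - 1) * 2 := by rw [← pow_succ]; congr 1; omega
  have hx : x = 2 ^ (s - 1) * (2 * (x / 2 ^ s) + 1) := by
    calc x = 2 ^ s * (x / 2 ^ s) + x % 2 ^ s := (Nat.div_add_mod x (2 ^ s)).symm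
    _ = 2 ^ s * (x / 2 ^ s) + 2 ^ (s - 1) := by rw [h]
    _ = 2 ^ (s - 1) * (2 * (x / 2 ^ s) + 1) := by rw [h2]; ring
  constructor
  · rw [hx]
    have hodd : ¬ (2 ∣ (2 * (x / 2 ^ s) + 1)) := by omega
    have h0 := padicValNat.eq_zero_of_not_dvd hodd
    rw [padicValNat.mul (by positivity) (by omega), h0, padicValNat.prime_pow]
    ring
  · calc 2 ^ (s - 1) = 2 ^ (s-1) * 1 := by ring
    _ ≤ x := by rw [hx]; exact Nat.mul_le_mul_left _ (by omega)

lemma mod_of_form {s u : ℕ} (hs : 1 ≤ s) :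
    (2 ^ (s - 1) * (2 * u + 1)) % 2 ^ s = 2 ^ (s - 1) := by
  have h2 : 2 ^ s = 2 ^ (s - 1) * 2 := by rw [← pow_succ]; congr 1; omega
  have h3 : (1:ℕ) ≤ 2 ^ (s - 1) := Nat.one_le_two_pow
  have : 2 ^ (s - 1) * (2 * u + 1) = 2 ^ s * u + 2 ^ (s - 1) := by rw [h2]; ring
  rw [this, Nat.mul_add_mod]
  exact Nat.mod_eq_of_lt (by omega)

lemma mem_stageBlock_iff {p k s : ℕ} {e : Elim} :
    e ∈ stageBlock p k s ↔ ∃ i, k < i ∧ i ≤ p ∧ (i - k) % 2 ^ s = 2 ^ (s - 1) ∧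
      e = Elim.mk i (i - 2 ^ (s - 1)) k := by
  simp only [stageBlock, List.mem_filterMap, List.mem_range']
  constructor
  · rintro ⟨i, ⟨j, hj, rfl⟩, hif⟩
    split_ifs at hif with hc
    · simp only [Option.some.injEq] at hif
      exact ⟨k + 1 + 1 * j, by omega, by omega, hc, hif.symm⟩
  · rintro ⟨i, h1, h2, h3, rfl⟩
    refine ⟨i, ⟨i - (k+1), by omega, by omega⟩, ?_⟩
    rw [if_pos h3]

lemma stg_of_mem_stageBlock {p k s : ℕ} {e : Elim} (hs : 1 ≤ s) (h : e ∈ stageBlock p k s) :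
    e.k = k ∧ stg e = s ∧ k < e.i ∧ e.i ≤ p ∧ e.piv = e.i - 2 ^ (s - 1) ∧
      2 ^ (s - 1) ≤ e.i - e.k ∧ e.i = e.piv + 2 ^ (s - 1) ∧
      (e.i - e.k) % 2 ^ s = 2 ^ (s - 1) := by
  rw [mem_stageBlock_iff] at h
  obtain ⟨i, h1, h2, h3, rfl⟩ := h
  obtain ⟨hv, hle⟩ := padic_of_mod hs h3
  have hpow : 1 ≤ 2 ^ (s - 1) := Nat.one_le_two_pow
  refine ⟨rfl, ?_, h1, h2, rfl, by simpa using hle, by simp; omega, by simpa using h3⟩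
  simp only [stg]
  have : (Elim.mk i (i - 2 ^ (s-1)) k).i - (Elim.mk i (i - 2 ^ (s-1)) k).k = i - k := rfl
  rw [this, hv]; omega

lemma mem_colBlock_k {p k : ℕ} {e : Elim} (h : e ∈ colBlock p k) : e.k = k := by
  rw [colBlock, List.mem_flatMap] at h
  obtain ⟨s, _, h⟩ := h
  rw [mem_stageBlock_iff] at h
  obtain ⟨i, _, _, _, rfl⟩ := h
  rfl

lemma mem_btList_intro {p q k s i : ℕ} (hk1 : 1 ≤ k) (hkq : k ≤ min p q) (hs1 : 1 ≤ s)
    (hsp : s ≤ p) (hi1 : k < i) (hip : i ≤ p) (hmod : (i - k) % 2 ^ s = 2 ^ (s - 1)) :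
    Elim.mk i (i - 2 ^ (s - 1)) k ∈ btList p q := by
  rw [btList_eq, List.mem_flatMap]
  refine ⟨k, by rw [List.mem_range']; exact ⟨k - 1, by omega, by omega⟩, ?_⟩
  rw [colBlock, List.mem_flatMap]
  refine ⟨s, by rw [List.mem_range']; exact ⟨s - 1, by omega, by omega⟩, ?_⟩
  rw [mem_stageBlock_iff]
  exact ⟨i, hi1, hip, hmod, rfl⟩

lemma mem_btList_elim {p q : ℕ} {e : Elim} (he : e ∈ btList p q) :
    1 ≤ e.k ∧ e.k ≤ min p q ∧ e.k < e.i ∧ e.i ≤ p ∧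
      2 ^ (stg e - 1) ≤ e.i - e.k ∧ e.piv = e.i - 2 ^ (stg e - 1) ∧
      e.i = e.piv + 2 ^ (stg e - 1) ∧ 1 ≤ stg e ∧
      (e.i - e.k) % 2 ^ (stg e) = 2 ^ (stg e - 1) := by
  rw [btList_eq, List.mem_flatMap] at he
  obtain ⟨k, hk, he⟩ := he
  rw [List.mem_range'] at hk
  obtain ⟨a, ha, rfl⟩ := hk
  rw [colBlock, List.mem_flatMap] at he
  obtain ⟨s, hsm, he⟩ := he
  rw [List.mem_range'] at hsm
  obtain ⟨b, hb, rfl⟩ := hsm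
  obtain ⟨hek, hstg, h1, h2, h3, h4, h5, h6⟩ := stg_of_mem_stageBlock (by omega) he
  rw [hstg]
  exact ⟨by omega, by omega, by rw [hek]; omega, h2, h4, h3, h5, by omega, h6⟩

/-- strict order respected by `btList` -/
def Rel (e f : Elim) : Prop :=
  e.k < f.k ∨ (e.k = f.k ∧ (stg e < stg f ∨ (stg e = stg f ∧ e.i < f.i)))

lemma rel_irrefl (e : Elim) : ¬ Rel e e := by simp [Rel]

lemma pairwise_range'_aux (n : ℕ) : (List.range' 1 n).Pairwise (fun a b => 1 ≤ a ∧ a < b) := by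
  rw [List.pairwise_iff_getElem]
  intro i j hi hj hij
  rw [List.getElem_range'_1, List.getElem_range'_1]
  omega

lemma btList_pairwise (p q : ℕ) : (btList p q).Pairwise Rel := by
  rw [btList_eq, List.pairwise_flatMap]
  constructor
  · intro k hk
    rw [List.mem_range'] at hk
    obtain ⟨a, ha, rfl⟩ := hk
    rw [colBlock, List.pairwise_flatMap]
    constructor
    · intro s hs
      rw [List.mem_range'] at hs
      obtain ⟨b, hb, rfl⟩ := hs
      rw [stageBlock, List.pairwise_filterMap]
      refine (List.pairwise_lt_range' (s := 1+1*a+1) (n := p - (1+1*a)) 1).imp ?_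
      intro i1 i2 h12 x hx y hy
      split_ifs at hx hy with c1 c2
      · rw [Option.some.injEq] at hx hy
        obtain ⟨d1, _⟩ := padic_of_mod (s := 1+1*b) (by omega) c1
        obtain ⟨d2, _⟩ := padic_of_mod (s := 1+1*b) (by omega) c2
        subst hx; subst hy
        right
        refine ⟨rfl, Or.inr ⟨?_, h12⟩⟩
        simp only [stg, d1, d2]
    · refine (pairwise_range'_aux p).imp ?_
      intro s1 s2 ⟨hs1, hs12⟩ x hx y hy
      obtain ⟨hxk, hxs, _⟩ := stg_of_mem_stageBlock hs1 hx
      obtain ⟨hyk, hys, _⟩ := stg_of_mem_stageBlock (by omega) hy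
      right
      exact ⟨by rw [hxk, hyk], Or.inl (by omega)⟩
  · refine (pairwise_range'_aux (min p q)).imp ?_
    intro k1 k2 ⟨_, h12⟩ x hx y hy
    left
    rw [mem_colBlock_k hx, mem_colBlock_k hy]
    exact h12

lemma before_rel {p q : ℕ} {e f : Elim} (h : Before (btList p q) e f) : Rel e f := by
  obtain ⟨a, b, hab, hae, hbf⟩ := h
  have := (List.pairwise_iff_getElem.mp (btList_pairwise p q)) a b a.isLt b.isLt hab
  simp only [List.get_eq_getElem] at hae hbf
  rwa [hae, hbf] at this

lemma before_mem_left {L : List Elim} {e f : Elim} (h : Before L e f) : e ∈ L := by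
  obtain ⟨a, _, _, hae, _⟩ := h; exact hae ▸ List.get_mem L a

lemma before_mem_right {L : List Elim} {e f : Elim} (h : Before L e f) : f ∈ L := by
  obtain ⟨_, b, _, _, hbf⟩ := h; exact hbf ▸ List.get_mem L b

/-- a serial `Before` dependence (same pivot, same column) strictly increases the stage -/
lemma before_stg {p q i i' piv k : ℕ} (h : Before (btList p q) ⟨i, piv, k⟩ ⟨i', piv, k⟩) :
    stg ⟨i, piv, k⟩ < stg ⟨i', piv, k⟩ := by
  have hrel := before_rel h
  obtain ⟨_, _, _, _, _, _, he, _, _⟩ := mem_btList_elim (before_mem_left h)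
  obtain ⟨_, _, _, _, _, _, hf, _, _⟩ := mem_btList_elim (before_mem_right h)
  rcases hrel with h1 | ⟨h1, h2 | ⟨h2, h3⟩⟩
  · simp at h1
  · exact h2
  · exfalso
    rw [show stg ⟨i', piv, k⟩ = stg ⟨i, piv, k⟩ from h2.symm] at hf
    have he' : i = piv + 2 ^ (stg ⟨i, piv, k⟩ - 1) := he
    have hf' : i' = piv + 2 ^ (stg ⟨i, piv, k⟩ - 1) := hf
    have h3' : i < i' := h3
    omega

lemma before_append {l1 l2 : List Elim} {e f : Elim} (he : e ∈ l1) (hf : f ∈ l2) :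
    Before (l1 ++ l2) e f := by
  obtain ⟨a, ha⟩ := List.mem_iff_get.mp he
  obtain ⟨b, hb⟩ := List.mem_iff_get.mp hf
  have hal : (a : ℕ) < (l1 ++ l2).length := by
    rw [List.length_append]; omega
  have hbl : l1.length + (b : ℕ) < (l1 ++ l2).length := by
    rw [List.length_append]; omega
  refine ⟨⟨a, hal⟩, ⟨l1.length + b, hbl⟩, by simp [a.isLt]; omega, ?_, ?_⟩
  · rw [List.get_eq_getElem]
    simp only
    rw [List.getElem_append_left a.isLt]
    rw [List.get_eq_getElem] at ha
    exact ha
  · rw [List.get_eq_getElem]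
    simp only
    rw [List.getElem_append_right (by omega)]
    rw [List.get_eq_getElem] at hb
    simpa using hb

lemma btList_split {p q k : ℕ} (hk1 : 1 ≤ k) (hkq : k ≤ min p q) :
    btList p q = ((List.range' 1 (k-1)).flatMap (colBlock p) ++ colBlock p k)
      ++ (List.range' (k+1) (min p q - k)).flatMap (colBlock p) := by
  rw [btList_eq]
  have h1 : List.range' 1 (min p q) =
      List.range' 1 (k-1) ++ (k :: List.range' (k+1) (min p q - k)) := by
    have h2 : k :: List.range' (k + 1) (min p q - k) = List.range' k (min p q - k + 1) := by
      rw [List.range'_succ]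
    rw [h2]
    have h3 := List.range'_append_1 (s := 1) (m := k-1) (n := min p q - k + 1)
    rw [show 1 + (k-1) = k by omega] at h3
    rw [h3]
    congr 1
    omega
  rw [h1, List.flatMap_append, List.flatMap_cons, List.append_assoc]

lemma colBlock_split {p k s : ℕ} (hs1 : 1 ≤ s) (hsp : s ≤ p) :
    colBlock p k = (List.range' 1 s).flatMap (stageBlock p k)
      ++ (List.range' (s+1) (p - s)).flatMap (stageBlock p k) := by
  rw [colBlock, ← List.flatMap_append]
  congr 1
  have h3 := List.range'_append_1 (s := 1) (m := s) (n := p - s)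
  rw [show 1 + s = s + 1 by omega] at h3
  rw [h3]
  congr 1
  omega

lemma before_btList_of_stages {p q k s s' : ℕ} {e f : Elim} (hk1 : 1 ≤ k) (hkq : k ≤ min p q)
    (hs1 : 1 ≤ s) (hss' : s < s') (hs'p : s' ≤ p)
    (he : e ∈ stageBlock p k s) (hf : f ∈ stageBlock p k s') :
    Before (btList p q) e f := by
  rw [btList_split hk1 hkq, colBlock_split (by omega : 1 ≤ s) (by omega : s ≤ p)]
  have heC : e ∈ (List.range' 1 s).flatMap (stageBlock p k) := by
    rw [List.mem_flatMap]
    exact ⟨s, by rw [List.mem_range']; exact ⟨s - 1, by omega, by omega⟩, he⟩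
  have hfD : f ∈ (List.range' (s+1) (p - s)).flatMap (stageBlock p k) := by
    rw [List.mem_flatMap]
    exact ⟨s', by rw [List.mem_range']; exact ⟨s' - s - 1, by omega, by omega⟩, hf⟩
  have hre : ((List.range' 1 (k-1)).flatMap (colBlock p) ++
        ((List.range' 1 s).flatMap (stageBlock p k) ++ (List.range' (s+1) (p - s)).flatMap (stageBlock p k)))
      ++ (List.range' (k+1) (min p q - k)).flatMap (colBlock p)
      = ((List.range' 1 (k-1)).flatMap (colBlock p) ++ (List.range' 1 s).flatMap (stageBlock p k))
      ++ ((List.range' (s+1) (p - s)).flatMap (stageBlock p k)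
        ++ (List.range' (k+1) (min p q - k)).flatMap (colBlock p)) := by
    simp [List.append_assoc]
  rw [hre]
  exact before_append (List.mem_append_right _ heC) (List.mem_append_left _ hfD)


/-! ### Upper bound -/

/-- stage as a function of row and column -/
def stN (i k : ℕ) : ℕ := padicValNat 2 (i - k) + 1

lemma stg_eq_stN (e : Elim) : stg e = stN e.i e.k := rfl

def Dp (p : ℕ) : ℕ := Nat.log 2 p + 1

def Wp (p : ℕ) : ℕ := 10 + 6 * Dp p

def lvl (p : ℕ) : Task → ℕ
  | .GEQRT _ k => (k-1) * Wp p + 4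
  | .UNMQR _ k _ => (k-1) * Wp p + 10
  | .TTQRT i _ k => (k-1) * Wp p + 4 + 2 * stN i k
  | .TTMQR i _ k _ => (k-1) * Wp p + 10 + 6 * stN i k

lemma one_le_stN (i k : ℕ) : 1 ≤ stN i k := Nat.le_add_left 1 _

lemma stN_le_Dp {p q : ℕ} {e : Elim} (he : e ∈ btList p q) : stN e.i e.k ≤ Dp p := by
  obtain ⟨_, _, hki, hip, hle, _, _, hst, _⟩ := mem_btList_elim he
  rw [← stg_eq_stN, Dp]
  have h1 : 2 ^ (stg e - 1) ≤ p := le_trans hle (by omega)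
  have h2 : stg e - 1 ≤ Nat.log 2 p := by
    rw [Nat.le_log_iff_pow_le (by norm_num) (by omega)]
    exact h1
  omega

lemma pivot_use_stN {p q a i piv k : ℕ} (h1 : Elim.mk a i k ∈ btList p q)
    (h2 : Elim.mk i piv k ∈ btList p q) : stN a k < stN i k := by
  obtain ⟨_, _, hka, hap, hle, hpiv, hsum, hst1, hmod⟩ := mem_btList_elim h1
  obtain ⟨_, _, hki, _, _, _, _, _, _⟩ := mem_btList_elim h2
  set s := stg (Elim.mk a i k) with hs
  simp only at hka hap hle hpiv hsum hmod hki
  -- a - k = (i - k) + 2^(s-1), and (a-k) % 2^s = 2^(s-1) hence 2^s ∣ i - k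
  have hik : i - k ≠ 0 := by omega
  have hak : a - k = (i - k) + 2 ^ (s - 1) := by omega
  have hdvd : 2 ^ s ∣ (i - k) := by
    have := Nat.div_add_mod (a - k) (2 ^ s)
    rw [hmod] at this
    exact ⟨(a - k) / 2 ^ s, by omega⟩
  have hval : s ≤ padicValNat 2 (i - k) := by
    have := (padicValNat_dvd_iff (p := 2) s (i - k)).mp hdvd
    rcases this with h | h
    · exact absurd h hik
    · exact h
  have hsa : stN a k = s := rfl
  rw [hsa, stN]
  omega

lemma weight_le_lvl (p : ℕ) (t : Task) : weight t ≤ lvl p t := by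
  cases t <;> simp [weight, lvl] <;> omega

lemma prec_lvl {p q : ℕ} {t t' : Task} (ht : InTasks p q (btList p q) t)
    (ht' : InTasks p q (btList p q) t') (h : Prec (btList p q) t t') :
    lvl p t + weight t' ≤ lvl p t' := by
  cases h with
  | geqrt_unmqr r k j => simp [lvl, weight]
  | geqrt_ttqrt_row i piv k =>
      have := one_le_stN i k; simp only [lvl, weight]; omega
  | geqrt_ttqrt_piv i piv k =>
      have := one_le_stN i k; simp only [lvl, weight]; omega
  | ttqrt_ttmqr i piv k j =>
      have := one_le_stN i k; simp only [lvl, weight]; omega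
  | unmqr_ttmqr_row i piv k j =>
      have := one_le_stN i k; simp only [lvl, weight]; omega
  | unmqr_ttmqr_piv i piv k j =>
      have := one_le_stN i k; simp only [lvl, weight]; omega
  | ttmqr_geqrt a b i k hk2 hab =>
      obtain ⟨hmem, _, _⟩ := ht
      have hst := stN_le_Dp (e := Elim.mk a b (k-1)) hmem
      simp only at hst
      simp only [lvl, weight]
      have hW : (k - 1 - 1) * Wp p + Wp p = (k - 1) * Wp p := by
        calc (k - 1 - 1) * Wp p + Wp p = (k - 1 - 1 + 1) * Wp p := by rw [Nat.add_mul, one_mul]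
        _ = (k - 1) * Wp p := by congr 1; omega
      have hWval : Wp p = 10 + 6 * Dp p := rfl
      omega
  | ttqrt_serial i i' piv k hbef =>
      have := before_stg hbef
      rw [stg_eq_stN, stg_eq_stN] at this
      simp only at this
      simp only [lvl, weight]
      omega
  | ttmqr_serial i i' piv k j hbef =>
      have := before_stg hbef
      rw [stg_eq_stN, stg_eq_stN] at this
      simp only at this
      simp only [lvl, weight]
      omega
  | ttqrt_pivot_use a i piv k =>
      have := pivot_use_stN ht ht'
      simp only [lvl, weight]
      omega
  | ttmqr_pivot_use a i piv k j =>
      obtain ⟨h1, _, _⟩ := ht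
      obtain ⟨h2, _, _⟩ := ht'
      have := pivot_use_stN h1 h2
      simp only [lvl, weight]
      omega

lemma lvl_le {p q : ℕ} {t : Task} (ht : InTasks p q (btList p q) t) :
    lvl p t ≤ min p q * Wp p := by
  have hW : Wp p = 10 + 6 * Dp p := rfl
  have hD : 1 ≤ Dp p := Nat.le_add_left 1 _
  have key : ∀ k, 1 ≤ k → k ≤ min p q → (k - 1) * Wp p + Wp p ≤ min p q * Wp p := by
    intro k h1 h2
    calc (k - 1) * Wp p + Wp p = (k - 1 + 1) * Wp p := by rw [Nat.add_mul, one_mul]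
    _ = k * Wp p := by congr 1; omega
    _ ≤ min p q * Wp p := Nat.mul_le_mul_right _ h2
  cases t with
  | GEQRT r k =>
      obtain ⟨h1, h2, _, _⟩ := ht
      have := key k h1 h2
      simp only [lvl]; omega
  | UNMQR r k j =>
      obtain ⟨h1, h2, _, _, _, _⟩ := ht
      have := key k h1 h2
      simp only [lvl]; omega
  | TTQRT i piv k =>
      obtain ⟨hk1, hk2, _, _, _, _, _, _, _⟩ := mem_btList_elim ht
      have hst := stN_le_Dp ht
      simp only at hk1 hk2 hst
      have := key k hk1 hk2
      simp only [lvl]; omega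
  | TTMQR i piv k j =>
      obtain ⟨hmem, _, _⟩ := ht
      obtain ⟨hk1, hk2, _, _, _, _, _, _, _⟩ := mem_btList_elim hmem
      have hst := stN_le_Dp hmem
      simp only at hk1 hk2 hst
      have := key k hk1 hk2
      simp only [lvl]; omega

lemma chain_lvl {p q : ℕ} : ∀ (l : List Task) (a : Task),
    (∀ t ∈ a :: l, InTasks p q (btList p q) t) →
    List.Chain' (Prec (btList p q)) (a :: l) →
    lvl p a + (l.map weight).sum ≤ lvl p ((a :: l).getLast (by simp)) := by
  intro l
  induction l with
  | nil => intro a _ _; simp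
  | cons b l ih =>
      intro a hmem hchain
      unfold List.Chain' at hchain
      rw [List.isChain_cons_cons] at hchain
      have h1 := prec_lvl (hmem a (by simp)) (hmem b (by simp)) hchain.1
      have h2 := ih b (fun t ht => hmem t (List.mem_cons_of_mem a ht)) hchain.2
      rw [List.getLast_cons (by simp : b :: l ≠ [])]
      simp only [List.map_cons, List.sum_cons]
      omega

lemma isPath_sum_le {p q : ℕ} {path : List Task} (h : IsPath p q (btList p q) path) :
    (path.map weight).sum ≤ min p q * Wp p := by
  obtain ⟨hmem, hchain⟩ := h
  cases path with
  | nil => simp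
  | cons a l =>
      have h1 := chain_lvl l a hmem hchain
      have h2 := lvl_le (hmem _ (List.getLast_mem (by simp)))
      have h3 := weight_le_lvl p a
      simp only [List.map_cons, List.sum_cons]
      omega

lemma cpLength_le (p q : ℕ) : cpLength p q (btList p q) ≤ min p q * Wp p := by
  apply csSup_le
  · exact ⟨0, [], ⟨by simp, List.isChain_nil⟩, rfl⟩
  · rintro w ⟨path, hpath, rfl⟩
    exact isPath_sum_le hpath


/-! ### Lower bound -/

/-- entry stage (number of descending steps) in column `k` -/
def mK (p k : ℕ) : ℕ := Nat.log 2 (p - k + 1)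

/-- maximal stage in column `k` -/
def MK (p k : ℕ) : ℕ := Nat.log 2 (p - k) + 1

lemma pow_split {m : ℕ} (h : 1 ≤ m) : 2 ^ m = 2 ^ (m - 1) + 2 ^ (m - 1) := by
  rw [← two_mul, ← pow_succ']
  congr 1
  omega

lemma one_le_mK {p k : ℕ} (h : k + 1 ≤ p) : 1 ≤ mK p k := by
  rw [mK, Nat.le_log_iff_pow_le (by norm_num) (by omega)]
  omega

lemma pow_mK_le {p k : ℕ} (h : k ≤ p) : 2 ^ mK p k ≤ p - k + 1 :=
  Nat.pow_log_le_self 2 (by omega)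

lemma pow_MK_le {p k : ℕ} (h : k + 1 ≤ p) : 2 ^ (MK p k - 1) ≤ p - k := by
  rw [MK]
  simpa using Nat.pow_log_le_self 2 (x := p - k) (by omega)

lemma one_le_MK (p k : ℕ) : 1 ≤ MK p k := Nat.le_add_left 1 _

lemma mK_le_MK {p k : ℕ} (h : k + 1 ≤ p) : mK p k ≤ MK p k := by
  have hm := pow_mK_le (by omega : k ≤ p)
  set m := mK p k with hmdef
  rcases Nat.eq_zero_or_pos m with h0 | h1
  · omega
  · have h2 : 2 ^ m = 2 ^ (m - 1) + 2 ^ (m - 1) := pow_split h1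
    have h3 : 1 ≤ 2 ^ (m - 1) := Nat.one_le_two_pow
    have h4 : 2 ^ (m - 1) ≤ p - k := by omega
    have h5 : m - 1 ≤ Nat.log 2 (p - k) := by
      rw [Nat.le_log_iff_pow_le (by norm_num) (by omega)]
      exact h4
    rw [MK]
    omega

/-- the descending-chain task at stage `t` of column `k` (with update column `k+1`) -/
def descT (p k t : ℕ) : Task :=
  .TTMQR (k + 2 ^ mK p k - 2 ^ (t - 1)) (k + 2 ^ mK p k - 2 ^ t) k (k + 1)

/-- the serial-chain task at stage `s` of column `k` -/
def serT (k s : ℕ) : Task := .TTMQR (k + 2 ^ (s - 1)) k k (k + 1)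

def colPath (p k : ℕ) : List Task :=
  (List.range' 1 (mK p k - 1)).map (descT p k)
    ++ (List.range' (mK p k) (MK p k - mK p k + 1)).map (serT k)

def crossPath (p k : ℕ) : List Task :=
  [.GEQRT (k + 2 ^ (MK p k - 1)) (k + 1), .UNMQR (k + 2 ^ (MK p k - 1)) (k + 1) (k + 2)]

lemma pow_desc {t m : ℕ} (h1 : 1 ≤ t) (htm : t ≤ m) :
    2 ^ m - 2 ^ (t - 1) = 2 ^ (t - 1) * (2 * (2 ^ (m - t) - 1) + 1) := by
  have hB : 1 ≤ 2 ^ (m - t) := Nat.one_le_two_pow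
  have h2 : 2 * (2 ^ (m - t) - 1) + 1 = 2 * 2 ^ (m - t) - 1 := by omega
  rw [h2, Nat.mul_sub, mul_one, ← mul_assoc]
  have h3 : 2 ^ (t - 1) * 2 = 2 ^ t := by
    rw [← pow_succ]; congr 1; omega
  rw [h3, ← pow_add]
  congr 2
  omega

/-- membership in `btList` of the descending elimination at stage `t ≤ mK - 1` -/
lemma desc_mem {p q k t : ℕ} (hk1 : 1 ≤ k) (hkq : k ≤ min p q) (hkp : k + 1 ≤ p)
    (ht1 : 1 ≤ t) (ht : t ≤ mK p k) :
    Elim.mk (k + 2 ^ mK p k - 2 ^ (t - 1)) (k + 2 ^ mK p k - 2 ^ t) k ∈ btList p q := by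
  set m := mK p k with hm
  have hm1 : 1 ≤ m := one_le_mK hkp
  have hple : 2 ^ m ≤ p - k + 1 := pow_mK_le (by omega)
  have h2t : 2 ^ t ≤ 2 ^ m := Nat.pow_le_pow_right (by norm_num) ht
  have h2t' : 2 ^ (t - 1) ≤ 2 ^ t := Nat.pow_le_pow_right (by norm_num) (by omega)
  have htt : 2 ^ t = 2 ^ (t - 1) + 2 ^ (t - 1) := pow_split ht1
  have h1t : 1 ≤ 2 ^ (t - 1) := Nat.one_le_two_pow
  have hts : t ≤ p := by
    have : 2 ^ t ≤ p - k + 1 := le_trans h2t hple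
    have h2 : t < 2 ^ t := Nat.lt_two_pow_self
    omega
  have hmod : ((k + 2 ^ m - 2 ^ (t - 1)) - k) % 2 ^ t = 2 ^ (t - 1) := by
    have he : k + 2 ^ m - 2 ^ (t - 1) - k = 2 ^ m - 2 ^ (t - 1) := by omega
    rw [he, pow_desc ht1 ht]
    exact mod_of_form ht1
  have hpiv : k + 2 ^ m - 2 ^ t = (k + 2 ^ m - 2 ^ (t - 1)) - 2 ^ (t - 1) := by omega
  rw [hpiv]
  exact mem_btList_intro hk1 hkq ht1 hts (by omega) (by omega) hmod

/-- membership in `btList` of the serial elimination at stage `s ≤ MK` -/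
lemma ser_mem {p q k s : ℕ} (hk1 : 1 ≤ k) (hkq : k ≤ min p q) (hkp : k + 1 ≤ p)
    (hs1 : 1 ≤ s) (hs : s ≤ MK p k) :
    Elim.mk (k + 2 ^ (s - 1)) k k ∈ btList p q := by
  have h2M : 2 ^ (MK p k - 1) ≤ p - k := pow_MK_le hkp
  have h2s : 2 ^ (s - 1) ≤ 2 ^ (MK p k - 1) := Nat.pow_le_pow_right (by norm_num) (by omega)
  have h1s : 1 ≤ 2 ^ (s - 1) := Nat.one_le_two_pow
  have hsp : s ≤ p := by
    have h2 : s - 1 < 2 ^ (s - 1) := Nat.lt_two_pow_self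
    omega
  have hmod : ((k + 2 ^ (s - 1)) - k) % 2 ^ s = 2 ^ (s - 1) := by
    have he : k + 2 ^ (s - 1) - k = 2 ^ (s - 1) * (2 * 0 + 1) := by omega
    rw [he]
    exact mod_of_form hs1
  have hpiv : k = (k + 2 ^ (s - 1)) - 2 ^ (s - 1) := by omega
  rw [show (Elim.mk (k + 2 ^ (s - 1)) k k)
      = Elim.mk (k + 2 ^ (s - 1)) ((k + 2 ^ (s - 1)) - 2 ^ (s - 1)) k by
    rw [Elim.mk.injEq]; omega]
  exact mem_btList_intro hk1 hkq hs1 hsp (by omega) (by omega) hmod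

/-- the serial elimination at stage `s` lies in `stageBlock p k s` -/
lemma ser_mem_stage {p k s : ℕ} (hkp : k + 1 ≤ p) (hs1 : 1 ≤ s) (hs : s ≤ MK p k) :
    Elim.mk (k + 2 ^ (s - 1)) k k ∈ stageBlock p k s := by
  have h2M : 2 ^ (MK p k - 1) ≤ p - k := pow_MK_le hkp
  have h2s : 2 ^ (s - 1) ≤ 2 ^ (MK p k - 1) := Nat.pow_le_pow_right (by norm_num) (by omega)
  have h1s : 1 ≤ 2 ^ (s - 1) := Nat.one_le_two_pow
  rw [mem_stageBlock_iff]
  refine ⟨k + 2 ^ (s - 1), by omega, by omega, ?_, ?_⟩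
  · have he : k + 2 ^ (s - 1) - k = 2 ^ (s - 1) * (2 * 0 + 1) := by omega
    rw [he]
    exact mod_of_form hs1
  · rw [Elim.mk.injEq]; omega

lemma ser_before {p q k s s' : ℕ} (hk1 : 1 ≤ k) (hkq : k ≤ min p q) (hkp : k + 1 ≤ p)
    (hs1 : 1 ≤ s) (hss' : s < s') (hs' : s' ≤ MK p k) :
    Before (btList p q) (Elim.mk (k + 2 ^ (s - 1)) k k) (Elim.mk (k + 2 ^ (s' - 1)) k k) := by
  have hsp : s' ≤ p := by
    have h2M : 2 ^ (MK p k - 1) ≤ p - k := pow_MK_le hkp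
    have h2s : 2 ^ (s' - 1) ≤ 2 ^ (MK p k - 1) := Nat.pow_le_pow_right (by norm_num) (by omega)
    have h2 : s' - 1 < 2 ^ (s' - 1) := Nat.lt_two_pow_self
    omega
  exact before_btList_of_stages hk1 hkq hs1 hss' hsp
    (ser_mem_stage hkp hs1 (by omega)) (ser_mem_stage hkp (by omega) hs')


lemma chain'_map_range' {α : Type*} {R : α → α → Prop} {f : ℕ → α} : ∀ (n a : ℕ),
    (∀ t, a ≤ t → t + 1 < a + n → R (f t) (f (t + 1))) →
    List.Chain' R ((List.range' a n).map f)
  | 0, a, _ => by simp; exact List.isChain_nil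
  | 1, a, _ => by simp; exact List.isChain_singleton _
  | (n + 2), a, h => by
    rw [List.range'_succ, List.map_cons]
    rw [List.range'_succ (s := a+1), List.map_cons]
    unfold List.Chain'
    rw [List.isChain_cons_cons]
    constructor
    · exact h a le_rfl (by omega)
    · rw [← List.map_cons, ← List.range'_succ]
      exact chain'_map_range' (n + 1) (a + 1) (fun t ht1 ht2 => h t (by omega) (by omega))

lemma head?_map_range' {α : Type*} {f : ℕ → α} {a n : ℕ} (h : 1 ≤ n) :
    (((List.range' a n).map f)).head? = some (f a) := by
  rw [show n = (n - 1) + 1 by omega, List.range'_succ]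
  simp

lemma getLast?_map_range' {α : Type*} {f : ℕ → α} {a n : ℕ} (h : 1 ≤ n) :
    (((List.range' a n).map f)).getLast? = some (f (a + n - 1)) := by
  rw [show n = (n - 1) + 1 by omega, List.range'_concat]
  rw [List.map_append]
  simp

lemma colPath_chain {p q k : ℕ} (hk1 : 1 ≤ k) (hkq : k ≤ min p q) (hkp : k + 1 ≤ p) :
    List.Chain' (Prec (btList p q)) (colPath p k) := by
  have hm1 : 1 ≤ mK p k := one_le_mK hkp
  have hmM : mK p k ≤ MK p k := mK_le_MK hkp
  rw [colPath]
  unfold List.Chain'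
  rw [List.isChain_append]
  refine ⟨?_, ?_, ?_⟩
  · -- descending chain
    apply chain'_map_range'
    intro t ht1 ht2
    rw [descT, descT]
    exact Prec.ttmqr_pivot_use _ _ _ _ _
  · -- serial chain
    apply chain'_map_range'
    intro s hs1 hs2
    rw [serT, serT]
    exact Prec.ttmqr_serial _ _ _ _ _
      (ser_before hk1 hkq hkp (by omega) (by omega) (by omega))
  · -- link
    intro x hx y hy
    rcases Nat.lt_or_ge (mK p k) 2 with hm2 | hm2
    · -- mK = 1 : descending part empty
      have : mK p k - 1 = 0 := by omega
      rw [this] at hx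
      simp at hx
    · rw [getLast?_map_range' (by omega)] at hx
      rw [head?_map_range' (by omega)] at hy
      simp only [Option.mem_some_iff] at hx hy
      subst hx; subst hy
      rw [show 1 + (mK p k - 1) - 1 = mK p k - 1 by omega]
      rw [descT, serT]
      have h1s : 1 ≤ 2 ^ (mK p k - 1) := Nat.one_le_two_pow
      have hrw : k + 2 ^ mK p k - 2 ^ (mK p k - 1) = k + 2 ^ (mK p k - 1) := by
        have := pow_split hm1
        omega
      rw [show k + 2 ^ (mK p k - 1) = k + 2 ^ mK p k - 2 ^ (mK p k - 1) from hrw.symm]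
      exact Prec.ttmqr_pivot_use _ _ _ _ _

lemma map_range'_ne_nil {α : Type*} {f : ℕ → α} {a n : ℕ} (h : 1 ≤ n) :
    (List.range' a n).map f ≠ [] := by simp; omega

lemma colPath_head {p k : ℕ} (hkp : k + 1 ≤ p) :
    (colPath p k).head? = some (.TTMQR (k + 2 ^ mK p k - 1) (k + 2 ^ mK p k - 2) k (k + 1)) := by
  have hm1 : 1 ≤ mK p k := one_le_mK hkp
  have hmM : mK p k ≤ MK p k := mK_le_MK hkp
  rw [colPath]
  rcases Nat.lt_or_ge (mK p k) 2 with hm2 | hm2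
  · have h0 : mK p k - 1 = 0 := by omega
    have h1 : mK p k = 1 := by omega
    rw [h0]
    simp only [List.range'_zero, List.map_nil, List.nil_append]
    rw [head?_map_range' (by omega), h1]
    norm_num [serT]
  · rw [List.head?_append_of_ne_nil _ (map_range'_ne_nil (by omega))]
    rw [head?_map_range' (by omega), descT]
    norm_num

lemma colPath_last {p k : ℕ} (hkp : k + 1 ≤ p) :
    (colPath p k).getLast? = some (serT k (MK p k)) := by
  have hm1 : 1 ≤ mK p k := one_le_mK hkp
  have hmM : mK p k ≤ MK p k := mK_le_MK hkp
  rw [colPath, List.getLast?_append_of_ne_nil _ (map_range'_ne_nil (by omega))]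
  rw [getLast?_map_range' (by omega)]
  congr 2
  omega

lemma colPath_ne_nil {p k : ℕ} (hkp : k + 1 ≤ p) : colPath p k ≠ [] := by
  have hm1 : 1 ≤ mK p k := one_le_mK hkp
  have hmM : mK p k ≤ MK p k := mK_le_MK hkp
  rw [colPath]
  intro hcon
  rw [List.append_eq_nil_iff] at hcon
  exact map_range'_ne_nil (by omega) hcon.2

lemma colPath_mem {p q k : ℕ} (hk1 : 1 ≤ k) (hkq : k + 1 ≤ q) (hqp : q ≤ p) :
    ∀ t ∈ colPath p k, InTasks p q (btList p q) t := by
  have hkp : k + 1 ≤ p := by omega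
  have hkminq : k ≤ min p q := by omega
  intro t ht
  rw [colPath, List.mem_append] at ht
  rcases ht with ht | ht
  · rw [List.mem_map] at ht
    obtain ⟨t0, ht0, rfl⟩ := ht
    rw [List.mem_range'] at ht0
    obtain ⟨j, hj, rfl⟩ := ht0
    exact ⟨desc_mem hk1 hkminq hkp (by omega) (by omega), by omega, by omega⟩
  · rw [List.mem_map] at ht
    obtain ⟨s, hs, rfl⟩ := ht
    rw [List.mem_range'] at hs
    obtain ⟨j, hj, rfl⟩ := hs
    have hmM : mK p k ≤ MK p k := mK_le_MK hkp
    have hm1 : 1 ≤ mK p k := one_le_mK hkp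
    exact ⟨ser_mem hk1 hkminq hkp (by omega) (by omega), by omega, by omega⟩

lemma sum_map_const_aux {α : Type*} (l : List α) (f : α → ℕ) (c : ℕ)
    (h : ∀ x ∈ l, f x = c) : (l.map f).sum = c * l.length := by
  induction l with
  | nil => simp
  | cons a l ih =>
      simp only [List.map_cons, List.sum_cons, List.length_cons, h a (by simp)]
      rw [ih (fun x hx => h x (by simp [hx]))]
      ring

lemma colPath_sum {p k : ℕ} (hkp : k + 1 ≤ p) :
    ((colPath p k).map weight).sum = 6 * MK p k := by
  have hm1 : 1 ≤ mK p k := one_le_mK hkp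
  have hmM : mK p k ≤ MK p k := mK_le_MK hkp
  rw [colPath]
  have h6 : ∀ t ∈ colPath p k, weight t = 6 := by
    intro t ht
    rw [colPath, List.mem_append] at ht
    rcases ht with ht | ht <;> rw [List.mem_map] at ht <;> obtain ⟨x, _, rfl⟩ := ht <;> rfl
  rw [show ((List.range' 1 (mK p k - 1)).map (descT p k)
      ++ (List.range' (mK p k) (MK p k - mK p k + 1)).map (serT k)) = colPath p k from rfl]
  rw [sum_map_const_aux _ _ 6 h6]
  rw [colPath, List.length_append, List.length_map, List.length_map,
    List.length_range', List.length_range']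
  omega

lemma crossPath_mem {p q k : ℕ} (hk1 : 1 ≤ k) (hkq : k + 2 ≤ q) (hqp : q ≤ p) :
    ∀ t ∈ crossPath p k, InTasks p q (btList p q) t := by
  have hkp : k + 1 ≤ p := by omega
  have h2M : 2 ^ (MK p k - 1) ≤ p - k := pow_MK_le hkp
  have h1M : 1 ≤ 2 ^ (MK p k - 1) := Nat.one_le_two_pow
  intro t ht
  simp only [crossPath, List.mem_cons, List.mem_singleton, List.not_mem_nil, or_false] at ht
  rcases ht with rfl | rfl
  · exact ⟨by omega, by omega, by omega, by omega⟩
  · exact ⟨by omega, by omega, by omega, by omega, by omega, by omega⟩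

lemma mK_succ_eq {p k : ℕ} (h : k + 1 ≤ p) : mK p (k + 1) = MK p k - 1 := by
  rw [mK, MK, show p - (k+1) + 1 = p - k by omega]
  omega


def fullPath (p c : ℕ) : List Task :=
  (List.range' 1 c).flatMap (fun k => colPath p k ++ crossPath p k) ++ colPath p (c + 1)

lemma fullPath_succ (p c : ℕ) :
    fullPath p (c + 1) = fullPath p c ++ (crossPath p (c + 1) ++ colPath p (c + 2)) := by
  rw [fullPath, fullPath, List.range'_concat, List.flatMap_append, show 1 + 1 * c = c + 1 by omega]
  simp [List.append_assoc]

lemma fullPath_spec {p q : ℕ} (hq2 : 2 ≤ q) (hqp : q ≤ p) : ∀ c, c + 2 ≤ q →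
    IsPath p q (btList p q) (fullPath p c) ∧
    (fullPath p c).getLast? = some (serT (c + 1) (MK p (c + 1))) ∧
    6 * ((List.range' 1 (c + 1)).map (MK p)).sum ≤ ((fullPath p c).map weight).sum := by
  intro c
  induction c with
  | zero =>
      intro hc
      have h1p : 1 + 1 ≤ p := by omega
      refine ⟨⟨?_, ?_⟩, ?_, ?_⟩
      · intro t ht
        rw [fullPath] at ht
        simp only [List.range'_zero, List.flatMap_nil, List.nil_append] at ht
        exact colPath_mem le_rfl (by omega) hqp t ht
      · rw [fullPath]
        simp only [List.range'_zero, List.flatMap_nil, List.nil_append]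
        exact colPath_chain le_rfl (by omega) h1p
      · rw [fullPath]
        simp only [List.range'_zero, List.flatMap_nil, List.nil_append]
        exact colPath_last h1p
      · rw [fullPath]
        simp only [List.range'_zero, List.flatMap_nil, List.nil_append]
        rw [colPath_sum h1p]
        simp
  | succ c ih =>
      intro hc
      obtain ⟨⟨hmem, hchain⟩, hlast, hsum⟩ := ih (by omega)
      have hc1p : c + 1 + 1 ≤ p := by omega
      have hc2p : c + 2 + 1 ≤ p := by omega
      have hcross : ∀ t ∈ crossPath p (c + 1), InTasks p q (btList p q) t :=
        crossPath_mem (by omega) (by omega) hqp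
      have hcol2 : ∀ t ∈ colPath p (c + 2), InTasks p q (btList p q) t :=
        colPath_mem (by omega) (by omega) hqp
      -- the row at which we cross from column c+1 to column c+2
      have hrowrw : c + 2 + 2 ^ mK p (c + 2) - 1 = c + 1 + 2 ^ (MK p (c + 1) - 1) := by
        have hh : mK p (c + 2) = MK p (c + 1) - 1 := mK_succ_eq (by omega)
        have hpos : 1 ≤ 2 ^ mK p (c + 2) := Nat.one_le_two_pow
        rw [hh] at hpos ⊢
        omega
      refine ⟨⟨?_, ?_⟩, ?_, ?_⟩
      · -- membership
        intro t ht
        rw [fullPath_succ, List.mem_append, List.mem_append] at ht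
        rcases ht with ht | ht | ht
        · exact hmem t ht
        · exact hcross t ht
        · exact hcol2 t ht
      · -- chain
        rw [fullPath_succ]
        unfold List.Chain'
        rw [List.isChain_append]
        refine ⟨hchain, ?_, ?_⟩
        · -- chain of cross ++ col(c+2)
          rw [List.isChain_append]
          refine ⟨?_, colPath_chain (by omega) (by omega) hc2p, ?_⟩
          · rw [crossPath]
            exact List.isChain_pair.mpr (Prec.geqrt_unmqr _ _ _)
          · -- link UNMQR -> head of colPath (c+2)
            intro x hx y hy
            rw [crossPath] at hx
            simp only [List.getLast?_cons_cons, List.getLast?_singleton,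
              Option.mem_some_iff] at hx
            subst hx
            rw [colPath_head hc2p, Option.mem_some_iff] at hy
            subst hy
            rw [show c + 2 + 2 ^ mK p (c + 2) - 1 = c + 1 + 2 ^ (MK p (c + 1) - 1)
              from hrowrw]
            exact Prec.unmqr_ttmqr_row _ _ _ _
        · -- link last of fullPath c -> GEQRT
          intro x hx y hy
          rw [hlast, Option.mem_some_iff] at hx
          subst hx
          rw [List.head?_append_of_ne_nil _ (by rw [crossPath]; simp), crossPath,
            List.head?_cons, Option.mem_some_iff] at hy
          subst hy
          rw [serT]
          exact Prec.ttmqr_geqrt _ _ _ (c + 2) (by omega) (Or.inl rfl)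
      · -- getLast
        rw [fullPath_succ,
          List.getLast?_append_of_ne_nil _ (l₂ := crossPath p (c+1) ++ colPath p (c+2))
            (by intro hcon; rw [List.append_eq_nil_iff] at hcon; exact colPath_ne_nil hc2p hcon.2),
          List.getLast?_append_of_ne_nil _ (colPath_ne_nil hc2p)]
        exact colPath_last hc2p
      · -- weight sum
        rw [fullPath_succ, List.map_append, List.sum_append, List.map_append, List.sum_append]
        rw [colPath_sum hc2p]
        have hcw : ((crossPath p (c + 1)).map weight).sum = 10 := by
          rw [crossPath]; rfl
        rw [hcw]
        rw [List.range'_concat, List.map_append, List.sum_append,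
          show 1 + 1 * (c + 1) = c + 2 by omega]
        simp only [List.map_singleton, List.sum_singleton]
        omega


lemma cpLength_ge {p q : ℕ} (hq2 : 2 ≤ q) (hqp : q ≤ p) :
    6 * ((List.range' 1 (q - 1)).map (MK p)).sum ≤ cpLength p q (btList p q) := by
  obtain ⟨hpath, _, hsum⟩ := fullPath_spec hq2 hqp (q - 2) (by omega)
  rw [show q - 2 + 1 = q - 1 by omega] at hsum
  refine le_trans hsum (le_csSup ?_ ?_)
  · refine ⟨min p q * Wp p, ?_⟩
    rintro w ⟨path, hp2, rfl⟩
    exact isPath_sum_le hp2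
  · exact ⟨fullPath p (q - 2), hpath, rfl⟩

lemma cpLength_le' (p q : ℕ) (hqp : q ≤ p) :
    cpLength p q (btList p q) ≤ q * (16 + 6 * Nat.log 2 p) := by
  have h := cpLength_le p q
  have h2 : Wp p = 16 + 6 * Nat.log 2 p := by rw [Wp, Dp]; ring
  rw [h2] at h
  exact le_trans h (Nat.mul_le_mul_right _ (by omega))


lemma natlog_le_logb {x : ℕ} (hx : 1 ≤ x) : (Nat.log 2 x : ℝ) ≤ Real.logb 2 x := by
  have h1 : (2:ℝ) ^ (Nat.log 2 x) ≤ x := by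
    have := Nat.pow_log_le_self 2 (x := x) (by omega)
    exact_mod_cast this
  have h2 : Real.logb 2 ((2:ℝ) ^ (Nat.log 2 x)) = Nat.log 2 x := by
    rw [Real.logb_pow, Real.logb_self_eq_one one_lt_two, mul_one]
  rw [← h2]
  exact (Real.logb_le_logb one_lt_two (by positivity) (by exact_mod_cast hx)).mpr h1

lemma logb_le_natlog_succ {x : ℕ} (hx : 1 ≤ x) : Real.logb 2 x ≤ (Nat.log 2 x : ℝ) + 1 := by
  have h1 : (x:ℝ) ≤ (2:ℝ) ^ (Nat.log 2 x + 1) := by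
    have := Nat.lt_pow_succ_log_self (b := 2) (by norm_num) x
    exact_mod_cast this.le
  have h2 : Real.logb 2 ((2:ℝ) ^ (Nat.log 2 x + 1)) = (Nat.log 2 x : ℝ) + 1 := by
    rw [Real.logb_pow, Real.logb_self_eq_one one_lt_two, mul_one]
    push_cast; ring
  rw [← h2]
  exact (Real.logb_le_logb one_lt_two (by exact_mod_cast hx) (by positivity)).mpr h1

lemma mul_card_le_sum_cast : ∀ {l : List ℕ} {c : ℝ}, (∀ x ∈ l, c ≤ (x:ℝ)) →
    c * l.length ≤ ((l.map (fun x : ℕ => (x:ℝ))).sum)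
  | [], c, _ => by simp
  | (a :: l), c, h => by
    have h1 := mul_card_le_sum_cast (l := l) (c := c) (fun x hx => h x (by simp [hx]))
    have h2 := h a (by simp)
    simp only [List.map_cons, List.sum_cons, List.length_cons]
    push_cast
    nlinarith [h1, h2]



set_option maxHeartbeats 2000000 in
/-- **Proposition 1.** The critical path length of the tiled BinaryTree algorithm
(with TT kernels) is `6 q log₂ p + o(q log₂ p)`: for every sequence `(pₙ, qₙ)` with
`qₙ ≤ pₙ`, `qₙ → ∞` and `pₙ → ∞`, the ratio `CP_BT(pₙ, qₙ) / (6 qₙ log₂ pₙ)` tends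
to `1`. -/
theorem binaryTree_cpLength_asymptotic (p q : ℕ → ℕ) (hqp : ∀ n, q n ≤ p n)
    (hq : Filter.Tendsto q Filter.atTop Filter.atTop)
    (hp : Filter.Tendsto p Filter.atTop Filter.atTop) :
    Filter.Tendsto
      (fun n => (cpLength (p n) (q n) (btList (p n) (q n)) : ℝ) /
        (6 * (q n : ℝ) * Real.logb 2 (p n)))
      Filter.atTop (nhds 1) := by
  rw [Metric.tendsto_atTop]
  intro ε0 hε0
  set ε : ℝ := min (ε0 / 4) (1 / 2) with hεdef
  have hε : 0 < ε := lt_min (by linarith) (by norm_num)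
  have hε2 : ε ≤ 1 / 2 := min_le_right _ _
  have hε4 : ε ≤ ε0 / 4 := min_le_left _ _
  set C : ℝ := Real.logb 2 ε⁻¹ with hCdef
  have hC0 : 0 ≤ C := Real.logb_nonneg one_lt_two (by
    rw [le_inv_comm₀ (by norm_num) hε]
    linarith)
  have hL : Filter.Tendsto (fun n => Real.logb 2 (p n)) Filter.atTop Filter.atTop :=
    (Real.tendsto_logb_atTop one_lt_two).comp (tendsto_natCast_atTop_atTop.comp hp)
  have hLev := hL.eventually_ge_atTop (max (C / ε) (3 / ε) + 1)
  have hqev := hq.eventually_ge_atTop (⌈(2:ℝ) / ε⌉₊ + 6)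
  have hpev := hp.eventually_ge_atTop 2
  obtain ⟨N, hN⟩ := Filter.eventually_atTop.mp (hLev.and (hqev.and hpev))
  refine ⟨N, fun n hn => ?_⟩
  obtain ⟨hLn, hqn, hpn⟩ := hN n hn
  -- abbreviations
  set P : ℕ := p n with hPdef
  set Q : ℕ := q n with hQdef
  set L : ℝ := Real.logb 2 P with hLdef
  have hQP : Q ≤ P := hqp n
  have hQ6 : 6 ≤ Q := by omega
  have hQε : 2 ≤ ε * Q := by
    have h1 : ((⌈(2:ℝ) / ε⌉₊ : ℝ)) ≤ Q := by exact_mod_cast le_trans (by omega) hqn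
    have h2 : (2:ℝ) / ε ≤ Q := le_trans (Nat.le_ceil _) h1
    calc (2:ℝ) = ε * (2 / ε) := by field_simp
    _ ≤ ε * Q := by nlinarith
  have hLC : C / ε ≤ L := by
    have h1 := le_max_left (C / ε) (3 / ε)
    linarith [hLn]
  have hL3 : 3 / ε ≤ L := by
    have h1 := le_max_right (C / ε) (3 / ε)
    linarith [hLn]
  have hL1 : 1 ≤ L := by
    rw [hLdef, show (1:ℝ) = Real.logb 2 2 from (Real.logb_self_eq_one one_lt_two).symm]
    exact (Real.logb_le_logb one_lt_two (by norm_num) (by exact_mod_cast (by omega : 1 ≤ P))).mpr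
      (by exact_mod_cast hpn)
  have hCL : C ≤ ε * L := by
    rw [div_le_iff₀ hε] at hLC
    linarith
  have hD : 0 < 6 * (Q:ℝ) * L := by positivity
  -- upper bound
  have hub : (cpLength P Q (btList P Q) : ℝ) / (6 * Q * L) ≤ 1 + ε := by
    rw [div_le_iff₀ hD]
    have h1 : (cpLength P Q (btList P Q) : ℝ) ≤ Q * (16 + 6 * Nat.log 2 P) := by
      exact_mod_cast cpLength_le' P Q hQP
    have h2 : (Nat.log 2 P : ℝ) ≤ L := natlog_le_logb (by omega)
    have h3 : 16 ≤ 6 * ε * L := by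
      rw [div_le_iff₀ hε] at hL3
      nlinarith
    have hQpos : (0:ℝ) < Q := by positivity
    nlinarith
  -- lower bound
  set d : ℕ := ⌈ε * (Q:ℝ)⌉₊ with hddef
  have hd1 : ε * Q ≤ d := Nat.le_ceil _
  have hd2 : (d:ℝ) < ε * Q + 1 := Nat.ceil_lt_add_one (by positivity)
  have hQ6R : (6:ℝ) ≤ (Q:ℝ) := by exact_mod_cast hQ6
  have hdQ : d + 2 ≤ Q := by
    have h1 : (d:ℝ) ≤ (Q:ℝ) / 2 + 1 := by nlinarith [hd2, hε2, hQ6R]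
    have h2 : ((d:ℕ):ℝ) + 2 ≤ (Q:ℝ) := by linarith
    exact_mod_cast h2
  set u : ℕ := Q - 1 - d with hudef
  have hucast : (u:ℝ) = (Q:ℝ) - 1 - d := by
    have h1 : u + 1 + d = Q := by omega
    have h2 : ((u:ℝ) + 1 + d) = (Q:ℝ) := by exact_mod_cast h1
    linarith
  have hPQ : (Q:ℝ) ≤ (P:ℝ) := by exact_mod_cast hQP
  -- per-term bound on the first u columns
  have hterm : ∀ x ∈ (List.range' 1 u).map (MK P), L - C ≤ ((x : ℕ) : ℝ) := by
    intro x hx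
    rw [List.mem_map] at hx
    obtain ⟨k, hk, rfl⟩ := hx
    have hk1 : 1 ≤ k ∧ k ≤ u := by
      rw [List.mem_range'] at hk
      obtain ⟨j, hj, rfl⟩ := hk
      omega
    have hkP : k + 1 ≤ P := by omega
    have hkR : (k:ℝ) ≤ (Q:ℝ) - 1 - ε * Q := by
      have h1 : (k:ℝ) ≤ (u:ℝ) := by exact_mod_cast hk1.2
      rw [hucast] at h1
      linarith
    have hεP : ε * P ≤ (P:ℝ) - k := by nlinarith [hPQ, hε2]
    have hcast : ((P - k : ℕ) : ℝ) = (P:ℝ) - k := by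
      push_cast [Nat.cast_sub (by omega : k ≤ P)]
      ring
    have hlog1 : L - C ≤ Real.logb 2 ((P - k : ℕ) : ℝ) := by
      have hεp : Real.logb 2 (ε * P) = Real.logb 2 ε + L := by
        rw [Real.logb_mul (ne_of_gt hε) (by positivity)]
      have hεC : Real.logb 2 ε = -C := by
        rw [hCdef, Real.logb_inv]
        ring
      have hmono : Real.logb 2 (ε * P) ≤ Real.logb 2 ((P - k : ℕ) : ℝ) := by
        rw [Real.logb_le_logb one_lt_two (by positivity) (by rw [hcast]; nlinarith [hε])]
        rw [hcast]
        exact hεP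
      rw [hεp, hεC] at hmono
      linarith
    have hlog2 : Real.logb 2 ((P - k : ℕ) : ℝ) ≤ (Nat.log 2 (P - k) : ℝ) + 1 :=
      logb_le_natlog_succ (by omega)
    have hMK : ((MK P k : ℕ) : ℝ) = (Nat.log 2 (P - k) : ℝ) + 1 := by
      rw [MK]
      push_cast
      ring
    rw [hMK]
    linarith
  -- sum bound
  have hS : (L - C) * u ≤ (((List.range' 1 (Q - 1)).map (MK P)).sum : ℝ) := by
    have hsplit : List.range' 1 (Q - 1) = List.range' 1 u ++ List.range' (1 + u) (Q - 1 - u) := by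
      rw [List.range'_append_1]
      congr 1
      omega
    have h1 : ((List.range' 1 u).map (MK P)).sum ≤ ((List.range' 1 (Q - 1)).map (MK P)).sum := by
      rw [hsplit, List.map_append, List.sum_append]
      omega
    have h2 : (L - C) * u ≤ ((((List.range' 1 u).map (MK P)).sum : ℕ) : ℝ) := by
      have h3 := mul_card_le_sum_cast (l := (List.range' 1 u).map (MK P)) (c := L - C) hterm
      rw [List.length_map, List.length_range'] at h3
      rw [Nat.cast_list_sum]
      exact h3
    have h4 : ((((List.range' 1 u).map (MK P)).sum : ℕ) : ℝ)
        ≤ ((((List.range' 1 (Q - 1)).map (MK P)).sum : ℕ) : ℝ) := by exact_mod_cast h1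
    linarith
  -- lower bound
  have hlb : 1 - 3 * ε ≤ (cpLength P Q (btList P Q) : ℝ) / (6 * Q * L) := by
    rw [le_div_iff₀ hD]
    have h1 : (6:ℝ) * ((((List.range' 1 (Q - 1)).map (MK P)).sum : ℕ) : ℝ)
        ≤ (cpLength P Q (btList P Q) : ℝ) := by exact_mod_cast cpLength_ge (by omega) hQP
    have hu1 : (1 - 2 * ε) * Q ≤ (u:ℝ) := by
      rw [hucast]
      nlinarith [hd2, hQε]
    have hLC2 : (1 - ε) * L ≤ L - C := by nlinarith [hCL]
    have hu0 : (0:ℝ) ≤ (u:ℝ) := by positivity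
    have hB0 : (0:ℝ) ≤ (1 - ε) * L := by nlinarith [hL1, hε2]
    have hmul := mul_le_mul hu1 hLC2 hB0 hu0
    have hfinal : (1 - 3 * ε) * (6 * Q * L) ≤ 6 * ((L - C) * u) := by nlinarith [hmul, hL1, hQ6R, sq_nonneg ε, hε, hε2]
    nlinarith [hS, h1, hfinal, hu0]
  -- conclusion
  rw [Real.dist_eq, abs_lt]
  have h3ε : 3 * ε < ε0 := by linarith
  constructor
  · linarith
  · linarith


end TiledQR
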